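/- arXiv:1611.07992 — 4 statements merged into one kernel-verified Lean document; each statement's English description precedes it below -/
import Mathlib

section
/- Suppose for every binary x ∈ {0,1}^n and every a ∈ U(x) (where U(x) = {a ∈ ℝ^m : a_i ≥ x_{i1}, a_i ≥ x_{i2}, a_i ≥ 1 − x_{i3}, a_i ≤ 1 ∀i}) one has Σᵢ aᵢ ≥ m only when a = (1,…,1), and suppose there exists x ∈ {0,1}^n such that every a ∈ U(x) satisfies Σᵢ aᵢ ≥ m. Then x satisfies the 3-SAT instance, i.e., for every clause i, at least one of x_{i1} = 1, x_{i2} = 1, or x_{i3} = 0 holds. -/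
/-- if Σ aᵢ ≥ m over U(x') forces a = 1 for every binary x', and some
binary x is such that every a ∈ U(x) satisfies Σ aᵢ ≥ m, then x satisfies the
3-SAT instance. -/
theorem stmt_2 (n m : ℕ) (i1 i2 i3 : Fin m → Fin n)
    (hforce : ∀ x : Fin n → ℝ, (∀ j, x j = 0 ∨ x j = 1) →
      ∀ a : Fin m → ℝ,
        (∀ i, x (i1 i) ≤ a i ∧ x (i2 i) ≤ a i ∧ 1 - x (i3 i) ≤ a i ∧ a i ≤ 1) →
        (m : ℝ) ≤ ∑ i, a i → a = fun _ => (1 : ℝ))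
    (x : Fin n → ℝ) (hx : ∀ j, x j = 0 ∨ x j = 1)
    (hall : ∀ a : Fin m → ℝ,
        (∀ i, x (i1 i) ≤ a i ∧ x (i2 i) ≤ a i ∧ 1 - x (i3 i) ≤ a i ∧ a i ≤ 1) →
        (m : ℝ) ≤ ∑ i, a i) :
    ∀ i, x (i1 i) = 1 ∨ x (i2 i) = 1 ∨ x (i3 i) = 0 := by
  intro i
  by_contra h
  push_neg at h
  obtain ⟨h1, h2, h3⟩ := h
  have e1 : x (i1 i) = 0 := (hx (i1 i)).resolve_right h1
  have e2 : x (i2 i) = 0 := (hx (i2 i)).resolve_right h2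
  have e3 : x (i3 i) = 1 := (hx (i3 i)).resolve_left h3
  set a : Fin m → ℝ := Function.update (fun _ => (1 : ℝ)) i 0 with ha
  have hsum := hall a ?_
  · have : ∑ j, a j = (m : ℝ) - 1 := by
      rw [ha, Finset.sum_update_of_mem (Finset.mem_univ i)]
      rw [Finset.sum_const, nsmul_eq_mul, mul_one,
        Finset.card_sdiff_of_subset (by simp), Finset.card_univ]
      simp
      push_cast [Nat.cast_sub i.pos]
      ring
    rw [this] at hsum
    linarith
  · intro j
    rcases eq_or_ne j i with rfl | hj
    · simp [ha, e1, e2, e3]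
    · have : a j = 1 := Function.update_of_ne hj _ _
      rw [this]
      rcases hx (i1 j) with h | h <;> rcases hx (i2 j) with h' | h' <;>
        rcases hx (i3 j) with h'' | h'' <;> simp [h, h', h'']
end

section
/- Let D ∈ ℝ^{m×n}, d ∈ ℝ^m, v, w ∈ ℝ^n with v, w ≥ 0, W = diag(w), x ∈ {0,1}^n, y ∈ ℝ^n, and let π̄ ∈ ℝ^n be a componentwise upper bound on the optimal dual variable of the constraint ξ ≤ v + W(1−x) in problem (P). If the set U(x) = {ξ : Dξ ≤ d, 0 ≤ ξ ≤ v + W(1−x)} is nonempty and LP strong duality holds for both problems, then h(x,y) := max{yᵀξ : ξ ∈ U(x)} equals h̄(x,y) := max{(y − Π̄x)ᵀξ + yᵀζ : Dξ + Dζ ≤ d, 0 ≤ ξ ≤ w, 0 ≤ ζ ≤ v}, where Π̄ = diag(π̄). -/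
open Matrix

/-- Proposition 1: with v, w ≥ 0, binary x, nonempty U(x), and LP
strong duality for both problems (encoded by attainment of the primal maxima and by
an optimal dual solution (π, q) of (P) whose multiplier π of the upper-bound
constraint is dominated by π̄), the worst-case values h(x,y) and h̄(x,y) coincide. -/
theorem stmt_4 {m n : ℕ}
    (D : Matrix (Fin m) (Fin n) ℝ) (d : Fin m → ℝ) (v w : Fin n → ℝ)
    (x y πbar : Fin n → ℝ)
    (hv : 0 ≤ v) (hw : 0 ≤ w) (hx : ∀ j, x j = 0 ∨ x j = 1)
    (hne : ∃ ξ : Fin n → ℝ, D.mulVec ξ ≤ d ∧ 0 ≤ ξ ∧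
        ∀ j, ξ j ≤ v j + w j * (1 - x j))
    (h hbar : ℝ)
    (hP : IsGreatest {val | ∃ ξ : Fin n → ℝ, D.mulVec ξ ≤ d ∧ 0 ≤ ξ ∧
        (∀ j, ξ j ≤ v j + w j * (1 - x j)) ∧ val = y ⬝ᵥ ξ} h)
    (hPbar : IsGreatest {val | ∃ ξ ζ : Fin n → ℝ,
        D.mulVec ξ + D.mulVec ζ ≤ d ∧ 0 ≤ ξ ∧ 0 ≤ ζ ∧
        (∀ j, ξ j ≤ w j) ∧ (∀ j, ζ j ≤ v j) ∧
        val = (fun j => y j - πbar j * x j) ⬝ᵥ ξ + y ⬝ᵥ ζ} hbar)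
    (hdual : ∃ (π : Fin n → ℝ) (q : Fin m → ℝ), 0 ≤ π ∧ 0 ≤ q ∧
        (∀ j, y j ≤ π j + Matrix.vecMul q D j) ∧
        q ⬝ᵥ d + π ⬝ᵥ v + (∑ j, π j * (w j * (1 - x j))) = h ∧
        ∀ j, π j ≤ πbar j) :
    h = hbar := by

  obtain ⟨hmem, hub⟩ := hP
  obtain ⟨hmem', hub'⟩ := hPbar
  apply le_antisymm
  · -- h ≤ hbar
    obtain ⟨ξ, hDξ, hξ0, hξub, hval⟩ := hmem
    apply hub'
    refine ⟨fun j => ξ j - min (ξ j) (v j), fun j => min (ξ j) (v j), ?_, ?_, ?_, ?_, ?_, ?_⟩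
    · have hf : (fun j => ξ j - min (ξ j) (v j)) + (fun j => min (ξ j) (v j)) = ξ := by
        funext j; simp
      rw [← Matrix.mulVec_add, hf]; exact hDξ
    · intro j; simp only [Pi.zero_apply]
      exact sub_nonneg.2 (min_le_left _ _)
    · intro j; exact le_min (hξ0 j) (hv j)
    · intro j
      show ξ j - min (ξ j) (v j) ≤ w j
      rcases min_cases (ξ j) (v j) with ⟨hm, _⟩ | ⟨hm, _⟩
      · rw [hm]
        have hwj : (0:ℝ) ≤ w j := hw j
        linarith
      · rw [hm]
        have hwj : (0:ℝ) ≤ w j := hw j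
        have hxx : w j * (1 - x j) ≤ w j := by
          rcases hx j with h0 | h0 <;> rw [h0] <;> nlinarith
        have := hξub j
        linarith
    · intro j; exact min_le_right _ _
    · rw [hval]
      simp only [dotProduct, ← Finset.sum_add_distrib]
      apply Finset.sum_congr rfl
      intro j _
      rcases hx j with h0 | h1
      · rw [h0]; ring
      · have : min (ξ j) (v j) = ξ j := by
          apply min_eq_left
          have := hξub j
          rw [h1] at this; simpa using this
        rw [this, h1]; ring
  · -- hbar ≤ h
    obtain ⟨ξ, ζ, hDsum, hξ0, hζ0, hξw, hζv, hval⟩ := hmem'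
    obtain ⟨π, q, hπ0, hq0, hyd, heq, hππ⟩ := hdual
    rw [hval, ← heq]
    have key1 : ∀ j, (y j - πbar j * x j) * ξ j
        ≤ π j * (w j * (1 - x j)) + Matrix.vecMul q D j * ξ j := by
      intro j
      have h1 : (y j - πbar j * x j) * ξ j
          ≤ (π j + Matrix.vecMul q D j - πbar j * x j) * ξ j := by
        apply mul_le_mul_of_nonneg_right _ (hξ0 j)
        have := hyd j; linarith
      have h2 : (π j - πbar j * x j) * ξ j ≤ π j * (w j * (1 - x j)) := by
        rcases hx j with h0 | h1
        · rw [h0]; simp only [mul_zero, sub_zero, mul_one]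
          have := mul_le_mul_of_nonneg_left (hξw j) (hπ0 j)
          linarith
        · rw [h1]; simp only [mul_one, sub_self, mul_zero]
          have : (π j - πbar j) * ξ j ≤ 0 :=
            mul_nonpos_of_nonpos_of_nonneg (by linarith [hππ j]) (hξ0 j)
          linarith
      nlinarith [h1, h2]
    have key2 : ∀ j, y j * ζ j ≤ π j * v j + Matrix.vecMul q D j * ζ j := by
      intro j
      have h1 : y j * ζ j ≤ (π j + Matrix.vecMul q D j) * ζ j :=
        mul_le_mul_of_nonneg_right (hyd j) (hζ0 j)
      have h2 : π j * ζ j ≤ π j * v j := mul_le_mul_of_nonneg_left (hζv j) (hπ0 j)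
      nlinarith [h1, h2]
    have hq : q ⬝ᵥ (D.mulVec ξ + D.mulVec ζ) ≤ q ⬝ᵥ d := by
      apply Finset.sum_le_sum
      intro i _
      exact mul_le_mul_of_nonneg_left (hDsum i) (hq0 i)
    have hsplit : q ⬝ᵥ (D.mulVec ξ + D.mulVec ζ)
        = Matrix.vecMul q D ⬝ᵥ ξ + Matrix.vecMul q D ⬝ᵥ ζ := by
      rw [dotProduct_add, Matrix.dotProduct_mulVec, Matrix.dotProduct_mulVec]
    have S1 : (fun j => y j - πbar j * x j) ⬝ᵥ ξ
        ≤ (∑ j, π j * (w j * (1 - x j))) + Matrix.vecMul q D ⬝ᵥ ξ := by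
      simp only [dotProduct, ← Finset.sum_add_distrib]
      exact Finset.sum_le_sum fun j _ => key1 j
    have S2 : y ⬝ᵥ ζ ≤ π ⬝ᵥ v + Matrix.vecMul q D ⬝ᵥ ζ := by
      simp only [dotProduct, ← Finset.sum_add_distrib]
      exact Finset.sum_le_sum fun j _ => key2 j
    have := hsplit ▸ hq
    linarith
end

section
/- Consider the dual LPs: (D) minimize qᵀd + πᵀv + πᵀW(1−x) subject to π + Dᵀq ≥ y, π, q ≥ 0; and (D') minimize tᵀd + rᵀw + sᵀv subject to s + Dᵀt ≥ y, r + Dᵀt ≥ y − Π̄x, r, s, t ≥ 0, where Π̄ = diag(π̄) with π̄ ≥ π* componentwise for the optimal π* of (D). If (π, q) is feasible for (D) and x ∈ {0,1}^n, then (r, s, t) = (π − diag(π)x, π, q) is feasible for (D') with objective value at most that of (π, q) in (D); hence opt(D') ≤ opt(D). -/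
open Matrix

/-- from a feasible solution (π, q) of the dual (D) (with π ≤ π̄
componentwise, as π̄ dominates the optimal dual solution) and binary x,
the point (r, s, t) = (π − diag(π)x, π, q) is feasible for (D') and its (D')
objective value is at most the (D) objective value of (π, q). -/
theorem stmt_5 {m n : ℕ}
    (D : Matrix (Fin m) (Fin n) ℝ) (d : Fin m → ℝ)
    (v w y πbar x : Fin n → ℝ)
    (hv : 0 ≤ v) (hw : 0 ≤ w) (hx : ∀ j, x j = 0 ∨ x j = 1)
    (π : Fin n → ℝ) (q : Fin m → ℝ)
    (hπ : 0 ≤ π) (hq : 0 ≤ q)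
    (hfeas : ∀ j, y j ≤ π j + Matrix.vecMul q D j)
    (hbound : ∀ j, π j ≤ πbar j) :
    (0 ≤ fun j => π j - π j * x j) ∧
    (∀ j, y j ≤ π j + Matrix.vecMul q D j) ∧
    (∀ j, y j - πbar j * x j ≤ (π j - π j * x j) + Matrix.vecMul q D j) ∧
    q ⬝ᵥ d + (∑ j, (π j - π j * x j) * w j) + π ⬝ᵥ v
      ≤ q ⬝ᵥ d + π ⬝ᵥ v + ∑ j, π j * (w j * (1 - x j)) := by
  refine ⟨fun j => ?_, hfeas, fun j => ?_, ?_⟩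
  · have h0 : (0:ℝ) ≤ π j := hπ j
    rcases hx j with h | h <;> simp [h] <;> linarith
  · rcases hx j with h | h
    · simpa [h] using hfeas j
    · have := hfeas j
      have hb := hbound j
      simp [h]; linarith
  · have : (∑ j, (π j - π j * x j) * w j) = ∑ j, π j * (w j * (1 - x j)) := by
      apply Finset.sum_congr rfl; intro j _; ring
    rw [this]; linarith
end

section
/- Under the Slater and nonnegativity assumptions of the conic setting, if (π, q) is feasible for the conic dual (KD): minimize qᵀd + πᵀv + πᵀW(1−x) subject to π + Dᵀq ≥ y, q ∈ K*, π ≥ 0, and x ∈ {0,1}^n, then (r, s, t) = (π − diag(π)x, π, q) is feasible for (KD'): minimize tᵀd + sᵀv + rᵀw subject to r + Dᵀt ≥ y − Π̄x, s + Dᵀt ≥ y, t ∈ K*, r, s ≥ 0, and its (KD') objective value is at most the (KD) objective value of (π, q). -/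
open Matrix

/-- if (π, q) is feasible for the conic dual (KD) with π ≤ π̄
componentwise and x is binary, then (r, s, t) = (π − diag(π)x, π, q) is feasible for
(KD') and its (KD') objective is at most the (KD) objective of (π, q). -/
theorem stmt_10 {m n : ℕ} (K : Set (Fin m → ℝ))
    (hKclosed : IsClosed K) (hKconvex : Convex ℝ K)
    (hKcone : ∀ c : ℝ, 0 ≤ c → ∀ k ∈ K, c • k ∈ K)
    (D : Matrix (Fin m) (Fin n) ℝ) (d : Fin m → ℝ)
    (v w y πbar x : Fin n → ℝ)
    (hv : 0 ≤ v) (hw : 0 ≤ w) (hx : ∀ j, x j = 0 ∨ x j = 1)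
    (π : Fin n → ℝ) (q : Fin m → ℝ)
    (hq : ∀ k ∈ K, 0 ≤ q ⬝ᵥ k) (hπ : 0 ≤ π)
    (hfeas : ∀ j, y j ≤ π j + Matrix.vecMul q D j)
    (hbound : ∀ j, π j ≤ πbar j) :
    (∀ j, y j - πbar j * x j ≤ (π j - π j * x j) + Matrix.vecMul q D j) ∧
    (∀ j, y j ≤ π j + Matrix.vecMul q D j) ∧
    (∀ k ∈ K, 0 ≤ q ⬝ᵥ k) ∧
    (0 ≤ fun j => π j - π j * x j) ∧ 0 ≤ π ∧
    q ⬝ᵥ d + π ⬝ᵥ v + (∑ j, (π j - π j * x j) * w j)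
      ≤ q ⬝ᵥ d + π ⬝ᵥ v + ∑ j, π j * (w j * (1 - x j)) := by
  refine ⟨fun j => ?_, hfeas, hq, fun j => ?_, hπ, le_of_eq ?_⟩
  · rcases hx j with h | h <;> simp [h] <;> nlinarith [hfeas j, hbound j]
  · rcases hx j with h | h <;> simp [h] <;> exact hπ j
  · congr 1; apply Finset.sum_congr rfl; intro j _; ring
end
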